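/- arXiv:2502.08506 — 2 statements merged into one kernel-verified Lean document; each statement's English description precedes it below -/
import Mathlib

section
/- Let I₀, I₁, J be ideals on an infinite set X with I₀ and I₁ orthogonal (there is A ∈ I₀ with X \ A ∈ I₁). Then cof_J(I₀∩I₁) = max{cof_J(I₀), cof_J(I₁)}. -/
open Cardinal Set

def IsIdealOn {X : Type*} (I : Set (Set X)) : Prop :=
  (∀ A ∈ I, ∀ B, B ⊆ A → B ∈ I) ∧
  (∀ A ∈ I, ∀ B ∈ I, A ∪ B ∈ I) ∧
  (Set.univ : Set X) ∉ I ∧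
  (∀ A : Set X, A.Finite → A ∈ I)

/-- `relCof J I`: least cardinality of a family `𝒜 ⊆ I` such that
every `I₀ ∈ I` satisfies `I₀ \ A ∈ J` for some `A ∈ 𝒜`. -/
noncomputable def relCof {X : Type*} (J I : Set (Set X)) : Cardinal :=
  sInf {c | ∃ 𝒜 : Set (Set X), 𝒜 ⊆ I ∧ Cardinal.mk 𝒜 = c ∧
    ∀ I₀ ∈ I, ∃ A ∈ 𝒜, I₀ \ A ∈ J}

lemma sUnion_mem_ideal {X : Type*} {I : Set (Set X)} (hI : IsIdealOn I)
    {S : Set (Set X)} (hfin : S.Finite) (hS : S ⊆ I) : ⋃₀ S ∈ I := by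
  refine Set.Finite.induction_on_subset (motive := fun s _ => ⋃₀ s ∈ I) S hfin ?_ ?_
  · simpa using hI.2.2.2 ∅ finite_empty
  · intro a s haS _ _ ih
    rw [sUnion_insert]
    exact hI.2.1 _ (hS haS) _ ih

lemma relCof_witness {X : Type*} (J I : Set (Set X)) (hJ : IsIdealOn J) :
    ∃ 𝒜 : Set (Set X), 𝒜 ⊆ I ∧ Cardinal.mk 𝒜 = relCof J I ∧
      ∀ I₀ ∈ I, ∃ A ∈ 𝒜, I₀ \ A ∈ J := by
  have hne : {c | ∃ 𝒜 : Set (Set X), 𝒜 ⊆ I ∧ Cardinal.mk 𝒜 = c ∧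
      ∀ I₀ ∈ I, ∃ A ∈ 𝒜, I₀ \ A ∈ J}.Nonempty := by
    refine ⟨Cardinal.mk I, I, subset_rfl, rfl, fun B hB => ⟨B, hB, ?_⟩⟩
    simpa using hJ.2.2.2 ∅ finite_empty
  obtain ⟨𝒜, h1, h2, h3⟩ := csInf_mem hne
  exact ⟨𝒜, h1, h2, h3⟩

lemma relCof_le_of_witness {X : Type*} {J I : Set (Set X)} {𝒜 : Set (Set X)}
    (h1 : 𝒜 ⊆ I) (h3 : ∀ I₀ ∈ I, ∃ A ∈ 𝒜, I₀ \ A ∈ J) :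
    relCof J I ≤ Cardinal.mk 𝒜 :=
  csInf_le' ⟨𝒜, h1, rfl, h3⟩

theorem stmt11 {X : Type*} [Infinite X] (I₀ I₁ J : Set (Set X))
    (hI₀ : IsIdealOn I₀) (hI₁ : IsIdealOn I₁) (hJ : IsIdealOn J)
    (horth : ∃ A ∈ I₀, Aᶜ ∈ I₁) :
    relCof J (I₀ ∩ I₁) = max (relCof J I₀) (relCof J I₁) := by
  obtain ⟨A, hA0, hA1⟩ := horth
  apply le_antisymm
  · -- ≤ : combine witnesses for I₀ and I₁
    obtain ⟨𝒜₀, hs0, hm0, hc0⟩ := relCof_witness J I₀ hJ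
    obtain ⟨𝒜₁, hs1, hm1, hc1⟩ := relCof_witness J I₁ hJ
    -- nonempty witnesses (need to cover ∅ ∈ I)
    have hne0 : 𝒜₀.Nonempty := by
      obtain ⟨B, hB, -⟩ := hc0 ∅ (hI₀.2.2.2 ∅ finite_empty); exact ⟨B, hB⟩
    have hne1 : 𝒜₁.Nonempty := by
      obtain ⟨B, hB, -⟩ := hc1 ∅ (hI₁.2.2.2 ∅ finite_empty); exact ⟨B, hB⟩
    -- combined element is in I₀ ∩ I₁
    have hcomb : ∀ a ∈ I₀, ∀ b ∈ I₁, (a ∩ Aᶜ) ∪ (b ∩ A) ∈ I₀ ∩ I₁ := by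
      intro a ha b hb
      constructor
      · exact hI₀.2.1 _ (hI₀.1 a ha _ inter_subset_left) _
          (hI₀.1 A hA0 _ inter_subset_right)
      · exact hI₁.2.1 _ (hI₁.1 Aᶜ hA1 _ inter_subset_right) _
          (hI₁.1 b hb _ inter_subset_left)
    -- covering property of combined elements
    have hcov : ∀ B ∈ I₀ ∩ I₁, ∀ a ∈ 𝒜₀, ∀ b ∈ 𝒜₁, (B \ a ∈ J) → (B \ b ∈ J) →
        B \ ((a ∩ Aᶜ) ∪ (b ∩ A)) ∈ J := by
      intro B _ a _ b _ ha hb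
      have hsub : B \ ((a ∩ Aᶜ) ∪ (b ∩ A)) ⊆ (B \ a) ∪ (B \ b) := by
        intro x hx
        simp only [mem_diff, mem_union, mem_inter_iff, mem_compl_iff, not_or, not_and,
          not_not] at hx ⊢
        by_cases hxA : x ∈ A
        · exact Or.inr ⟨hx.1, fun h => absurd hxA (by tauto)⟩
        · exact Or.inl ⟨hx.1, fun h => hxA (hx.2.1 h)⟩
      exact hJ.1 _ (hJ.2.1 _ ha _ hb) _ hsub
    by_cases hfin : max (relCof J I₀) (relCof J I₁) < ℵ₀
    · -- finite case: singleton witness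
      have hf0 : 𝒜₀.Finite := by
        rw [← Cardinal.lt_aleph0_iff_set_finite, hm0]
        exact lt_of_le_of_lt (le_max_left _ _) hfin
      have hf1 : 𝒜₁.Finite := by
        rw [← Cardinal.lt_aleph0_iff_set_finite, hm1]
        exact lt_of_le_of_lt (le_max_right _ _) hfin
      set U₀ := ⋃₀ 𝒜₀ with hU₀
      set U₁ := ⋃₀ 𝒜₁ with hU₁
      have hU₀I : U₀ ∈ I₀ := sUnion_mem_ideal hI₀ hf0 hs0
      have hU₁I : U₁ ∈ I₁ := sUnion_mem_ideal hI₁ hf1 hs1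
      have hW : relCof J (I₀ ∩ I₁) ≤
          Cardinal.mk ({(U₀ ∩ Aᶜ) ∪ (U₁ ∩ A)} : Set (Set X)) := by
        apply relCof_le_of_witness
        · intro C hC
          rw [mem_singleton_iff] at hC
          rw [hC]
          exact hcomb _ hU₀I _ hU₁I
        · intro B hB
          refine ⟨_, mem_singleton _, ?_⟩
          obtain ⟨a, ha, haJ⟩ := hc0 B hB.1
          obtain ⟨b, hb, hbJ⟩ := hc1 B hB.2
          have haJ' : B \ U₀ ∈ J :=
            hJ.1 _ haJ _ (diff_subset_diff_right (subset_sUnion_of_mem ha))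
          have hbJ' : B \ U₁ ∈ J :=
            hJ.1 _ hbJ _ (diff_subset_diff_right (subset_sUnion_of_mem hb))
          -- reuse hcov with a := U₀, b := U₁ (not in families, but proof only needs J facts)
          have hsub : B \ ((U₀ ∩ Aᶜ) ∪ (U₁ ∩ A)) ⊆ (B \ U₀) ∪ (B \ U₁) := by
            intro x hx
            simp only [mem_diff, mem_union, mem_inter_iff, mem_compl_iff, not_or, not_and,
              not_not] at hx ⊢
            by_cases hxA : x ∈ A
            · exact Or.inr ⟨hx.1, fun h => absurd hxA (by tauto)⟩
            · exact Or.inl ⟨hx.1, fun h => hxA (hx.2.1 h)⟩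
          exact hJ.1 _ (hJ.2.1 _ haJ' _ hbJ') _ hsub
      have h1 : Cardinal.mk ({(U₀ ∩ Aᶜ) ∪ (U₁ ∩ A)} : Set (Set X)) = 1 := by simp
      have hone : (1 : Cardinal) ≤ relCof J I₀ := by
        rw [← hm0, Cardinal.one_le_iff_ne_zero, Cardinal.mk_ne_zero_iff]
        exact hne0.to_subtype
      calc relCof J (I₀ ∩ I₁) ≤ 1 := by rw [← h1]; exact hW
        _ ≤ max (relCof J I₀) (relCof J I₁) := le_trans hone (le_max_left _ _)
    · -- infinite case: product family
      push_neg at hfin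
      set f : ↥𝒜₀ × ↥𝒜₁ → Set X := fun p => ((p.1 : Set X) ∩ Aᶜ) ∪ ((p.2 : Set X) ∩ A)
        with hf
      have hW : relCof J (I₀ ∩ I₁) ≤ Cardinal.mk (Set.range f) := by
        apply relCof_le_of_witness
        · rintro C ⟨⟨a, b⟩, rfl⟩
          exact hcomb _ (hs0 a.2) _ (hs1 b.2)
        · intro B hB
          obtain ⟨a, ha, haJ⟩ := hc0 B hB.1
          obtain ⟨b, hb, hbJ⟩ := hc1 B hB.2
          exact ⟨f (⟨a, ha⟩, ⟨b, hb⟩), mem_range_self _,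
            hcov B hB a ha b hb haJ hbJ⟩
      have hcard : Cardinal.mk (Set.range f) ≤ Cardinal.mk 𝒜₀ * Cardinal.mk 𝒜₁ := by
        calc Cardinal.mk (Set.range f) ≤ Cardinal.mk (↥𝒜₀ × ↥𝒜₁) := Cardinal.mk_range_le
          _ = Cardinal.mk 𝒜₀ * Cardinal.mk 𝒜₁ := by rw [Cardinal.mk_prod]; simp
      have : Cardinal.mk 𝒜₀ * Cardinal.mk 𝒜₁ ≤ max (relCof J I₀) (relCof J I₁) := by
        rw [hm0, hm1]
        calc relCof J I₀ * relCof J I₁ ≤ max (max (relCof J I₀) (relCof J I₁)) ℵ₀ :=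
              Cardinal.mul_le_max _ _
          _ = max (relCof J I₀) (relCof J I₁) := max_eq_left hfin
      exact le_trans hW (le_trans hcard this)
  · -- ≥ : both relCofs bounded by relCof of intersection
    obtain ⟨𝒜, hs, hm, hc⟩ := relCof_witness J (I₀ ∩ I₁) hJ
    apply max_le
    · have hW : relCof J I₀ ≤ Cardinal.mk ((· ∪ A) '' 𝒜) := by
        apply relCof_le_of_witness
        · rintro C ⟨D, hD, rfl⟩
          exact hI₀.2.1 _ (hs hD).1 _ hA0
        · intro B hB
          have hBA : B ∩ Aᶜ ∈ I₀ ∩ I₁ :=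
            ⟨hI₀.1 B hB _ inter_subset_left, hI₁.1 Aᶜ hA1 _ inter_subset_right⟩
          obtain ⟨C, hC, hCJ⟩ := hc _ hBA
          refine ⟨C ∪ A, mem_image_of_mem _ hC, hJ.1 _ hCJ _ ?_⟩
          intro x hx
          simp only [mem_diff, mem_union, mem_inter_iff, mem_compl_iff, not_or] at hx ⊢
          tauto
      calc relCof J I₀ ≤ Cardinal.mk ((· ∪ A) '' 𝒜) := hW
        _ ≤ Cardinal.mk 𝒜 := Cardinal.mk_image_le
        _ = relCof J (I₀ ∩ I₁) := hm
    · have hW : relCof J I₁ ≤ Cardinal.mk ((· ∪ Aᶜ) '' 𝒜) := by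
        apply relCof_le_of_witness
        · rintro C ⟨D, hD, rfl⟩
          exact hI₁.2.1 _ (hs hD).2 _ hA1
        · intro B hB
          have hBA : B ∩ A ∈ I₀ ∩ I₁ :=
            ⟨hI₀.1 A hA0 _ inter_subset_right, hI₁.1 B hB _ inter_subset_left⟩
          obtain ⟨C, hC, hCJ⟩ := hc _ hBA
          refine ⟨C ∪ Aᶜ, mem_image_of_mem _ hC, hJ.1 _ hCJ _ ?_⟩
          intro x hx
          simp only [mem_diff, mem_union, mem_inter_iff, mem_compl_iff, not_or, not_not] at hx ⊢
          tauto
      calc relCof J I₁ ≤ Cardinal.mk ((· ∪ Aᶜ) '' 𝒜) := hW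
        _ ≤ Cardinal.mk 𝒜 := Cardinal.mk_image_le
        _ = relCof J (I₀ ∩ I₁) := hm
end

section
/- Let I₀, I₁, J be ideals on an infinite set X such that I₀ and I₁ are not orthogonal, I₀∩I₁ ⊆ J, and the family I₀∨I₁ = {A∪B : A ∈ I₀, B ∈ I₁} is an ideal. Then cof_J(I₀∨I₁) = max{cof_J(I₀), cof_J(I₁)}. -/
open Cardinal Set

section Aux

variable {X : Type*}

lemma relCof_spec (J I : Set (Set X)) (hJ : ∅ ∈ J) :
    ∃ 𝒜 : Set (Set X), 𝒜 ⊆ I ∧ Cardinal.mk 𝒜 = relCof J I ∧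
      ∀ I₀ ∈ I, ∃ A ∈ 𝒜, I₀ \ A ∈ J := by
  have hne : {c | ∃ 𝒜 : Set (Set X), 𝒜 ⊆ I ∧ Cardinal.mk 𝒜 = c ∧
      ∀ I₀ ∈ I, ∃ A ∈ 𝒜, I₀ \ A ∈ J}.Nonempty :=
    ⟨Cardinal.mk I, I, subset_rfl, rfl, fun I0 h => ⟨I0, h, by simpa using hJ⟩⟩
  exact csInf_mem hne

lemma relCof_le (J I : Set (Set X)) {𝒜 : Set (Set X)} (h1 : 𝒜 ⊆ I)
    (h2 : ∀ I₀ ∈ I, ∃ A ∈ 𝒜, I₀ \ A ∈ J) : relCof J I ≤ Cardinal.mk 𝒜 :=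
  csInf_le' ⟨𝒜, h1, rfl, h2⟩

lemma one_le_relCof (J I : Set (Set X)) (hJ : ∅ ∈ J) (hI : ∅ ∈ I) :
    1 ≤ relCof J I := by
  obtain ⟨𝒜, -, hmk, hcov⟩ := relCof_spec J I hJ
  rw [← hmk, Cardinal.one_le_iff_ne_zero, Cardinal.mk_ne_zero_iff]
  rw [Set.nonempty_coe_sort]
  obtain ⟨A, hA, -⟩ := hcov ∅ hI
  exact ⟨A, hA⟩

lemma sUnion_mem_ideal_s12 {I : Set (Set X)} (hI : IsIdealOn I)
    {𝒜 : Set (Set X)} (h𝒜 : 𝒜.Finite) (hsub : 𝒜 ⊆ I) : ⋃₀ 𝒜 ∈ I := by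
  refine Set.Finite.induction_on_subset (motive := fun s _ => ⋃₀ s ∈ I) 𝒜 h𝒜 (by simpa using hI.2.2.2 ∅ finite_empty) ?_
  intro a s haS _ _ ih
  rw [sUnion_insert]
  exact hI.2.1 _ (hsub haS) _ ih

end Aux

theorem stmt12 {X : Type*} [Infinite X] (I₀ I₁ J : Set (Set X))
    (hI₀ : IsIdealOn I₀) (hI₁ : IsIdealOn I₁) (hJ : IsIdealOn J)
    (hnorth : ¬ ∃ A ∈ I₀, Aᶜ ∈ I₁) (hsub : I₀ ∩ I₁ ⊆ J)
    (hsup : IsIdealOn {S : Set X | ∃ A ∈ I₀, ∃ B ∈ I₁, S = A ∪ B}) :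
    relCof J {S : Set X | ∃ A ∈ I₀, ∃ B ∈ I₁, S = A ∪ B} =
      max (relCof J I₀) (relCof J I₁) := by
  set Sup : Set (Set X) := {S : Set X | ∃ A ∈ I₀, ∃ B ∈ I₁, S = A ∪ B} with hSup
  have hJempty : ∅ ∈ J := hJ.2.2.2 ∅ finite_empty
  have hI0empty : ∅ ∈ I₀ := hI₀.2.2.2 ∅ finite_empty
  have hI1empty : ∅ ∈ I₁ := hI₁.2.2.2 ∅ finite_empty
  have hJdown := hJ.1
  have hJun := hJ.2.1
  -- I₀ ⊆ Sup and I₁ ⊆ Sup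
  have hI₀Sup : I₀ ⊆ Sup := fun A hA => ⟨A, hA, ∅, hI1empty, (union_empty A).symm⟩
  have hI₁Sup : I₁ ⊆ Sup := fun B hB => ⟨∅, hI0empty, B, hB, (empty_union B).symm⟩
  -- lower bound: relCof J I₀ ≤ relCof J Sup, and same for I₁
  obtain ⟨𝒜, h𝒜sub, h𝒜mk, h𝒜cov⟩ := relCof_spec J Sup hJempty
  choose f hf g hg hfg using fun (S : 𝒜) => h𝒜sub S.2
  have key : ∀ (i : Bool), relCof J (if i then I₁ else I₀) ≤ relCof J Sup := by
    intro i
    set I' := if i then I₁ else I₀ with hI'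
    set h : 𝒜 → Set X := if i then g else f with hh
    have hh' : ∀ S : 𝒜, h S ∈ I' := by
      intro S; cases i <;> simp [hh, hI'] <;> [exact hf S; exact hg S]
    have hother : ∀ S : 𝒜, ∃ C ∈ (if i then I₀ else I₁), (S : Set X) = h S ∪ C := by
      intro S; cases i
      · exact ⟨g S, hg S, hfg S⟩
      · exact ⟨f S, hf S, by rw [union_comm]; exact hfg S⟩
    calc relCof J I' ≤ Cardinal.mk (Set.range h) := by
          apply relCof_le
          · rintro _ ⟨S, rfl⟩; exact hh' S
          · intro C hC
            have hCSup : C ∈ Sup := by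
              cases i
              · exact hI₀Sup hC
              · exact hI₁Sup hC
            obtain ⟨S, hS, hCS⟩ := h𝒜cov C hCSup
            refine ⟨h ⟨S, hS⟩, ⟨⟨S, hS⟩, rfl⟩, ?_⟩
            obtain ⟨D, hD, hSD⟩ := hother ⟨S, hS⟩
            have hsubJ : C \ h ⟨S, hS⟩ ⊆ (C \ S) ∪ (C ∩ D) := by
              intro x hx
              by_cases hxS : x ∈ S
              · right
                refine ⟨hx.1, ?_⟩
                rw [show S = h ⟨S, hS⟩ ∪ D from hSD] at hxS
                rcases hxS with h1 | h1
                · exact absurd h1 hx.2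
                · exact h1
              · exact Or.inl ⟨hx.1, hxS⟩
            have hCD : C ∩ D ∈ J := by
              apply hsub
              cases i
              · exact ⟨hI₀.1 C hC _ inter_subset_left, hI₁.1 D hD _ inter_subset_right⟩
              · exact ⟨hI₀.1 D hD _ inter_subset_right, hI₁.1 C hC _ inter_subset_left⟩
            exact hJdown _ (hJun _ hCS _ hCD) _ hsubJ
      _ ≤ Cardinal.mk 𝒜 := Cardinal.mk_range_le
      _ = relCof J Sup := h𝒜mk
  have key0 : relCof J I₀ ≤ relCof J Sup := by simpa using key false
  have key1 : relCof J I₁ ≤ relCof J Sup := by simpa using key true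
  -- upper bound
  obtain ⟨𝒜₀, h𝒜₀sub, h𝒜₀mk, h𝒜₀cov⟩ := relCof_spec J I₀ hJempty
  obtain ⟨𝒜₁, h𝒜₁sub, h𝒜₁mk, h𝒜₁cov⟩ := relCof_spec J I₁ hJempty
  refine le_antisymm ?_ (max_le key0 key1)
  rcases lt_or_ge (max (relCof J I₀) (relCof J I₁)) ℵ₀ with hfin | hinf
  · -- both finite: a single set suffices
    have hfin₀ : 𝒜₀.Finite := by
      rw [← Cardinal.lt_aleph0_iff_set_finite, h𝒜₀mk]
      exact (le_max_left _ _).trans_lt hfin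
    have hfin₁ : 𝒜₁.Finite := by
      rw [← Cardinal.lt_aleph0_iff_set_finite, h𝒜₁mk]
      exact (le_max_right _ _).trans_lt hfin
    have hU₀ : ⋃₀ 𝒜₀ ∈ I₀ := sUnion_mem_ideal_s12 hI₀ hfin₀ h𝒜₀sub
    have hU₁ : ⋃₀ 𝒜₁ ∈ I₁ := sUnion_mem_ideal_s12 hI₁ hfin₁ h𝒜₁sub
    have hcov : ∀ S ∈ Sup, S \ (⋃₀ 𝒜₀ ∪ ⋃₀ 𝒜₁) ∈ J := by
      rintro S ⟨A, hA, B, hB, rfl⟩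
      obtain ⟨A', hA', hAA'⟩ := h𝒜₀cov A hA
      obtain ⟨B', hB', hBB'⟩ := h𝒜₁cov B hB
      refine hJdown _ (hJun _ hAA' _ hBB') _ ?_
      intro x hx
      rcases hx.1 with h1 | h1
      · exact Or.inl ⟨h1, fun hc => hx.2 (Or.inl ⟨A', hA', hc⟩)⟩
      · exact Or.inr ⟨h1, fun hc => hx.2 (Or.inr ⟨B', hB', hc⟩)⟩
    calc relCof J Sup ≤ Cardinal.mk ({⋃₀ 𝒜₀ ∪ ⋃₀ 𝒜₁} : Set (Set X)) := by
          apply relCof_le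
          · rintro _ rfl
            exact ⟨_, hU₀, _, hU₁, rfl⟩
          · intro S hS
            exact ⟨_, rfl, hcov S hS⟩
      _ = 1 := Cardinal.mk_singleton _
      _ ≤ max (relCof J I₀) (relCof J I₁) :=
          le_max_of_le_left (one_le_relCof J I₀ hJempty hI0empty)
  · -- infinite case: product family
    have hPsub : Set.image2 (· ∪ ·) 𝒜₀ 𝒜₁ ⊆ Sup := by
      rintro _ ⟨A, hA, B, hB, rfl⟩
      exact ⟨A, h𝒜₀sub hA, B, h𝒜₁sub hB, rfl⟩
    have hPcov : ∀ S ∈ Sup, ∃ P ∈ Set.image2 (· ∪ ·) 𝒜₀ 𝒜₁, S \ P ∈ J := by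
      rintro S ⟨A, hA, B, hB, rfl⟩
      obtain ⟨A', hA', hAA'⟩ := h𝒜₀cov A hA
      obtain ⟨B', hB', hBB'⟩ := h𝒜₁cov B hB
      refine ⟨A' ∪ B', ⟨A', hA', B', hB', rfl⟩, ?_⟩
      refine hJdown _ (hJun _ hAA' _ hBB') _ ?_
      intro x hx
      rcases hx.1 with h1 | h1
      · exact Or.inl ⟨h1, fun hc => hx.2 (Or.inl hc)⟩
      · exact Or.inr ⟨h1, fun hc => hx.2 (Or.inr hc)⟩
    calc relCof J Sup ≤ Cardinal.mk (Set.image2 (· ∪ ·) 𝒜₀ 𝒜₁) :=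
          relCof_le J Sup hPsub hPcov
      _ ≤ Cardinal.mk 𝒜₀ * Cardinal.mk 𝒜₁ := Cardinal.mk_image2_le
      _ = relCof J I₀ * relCof J I₁ := by rw [h𝒜₀mk, h𝒜₁mk]
      _ ≤ max (max (relCof J I₀) (relCof J I₁)) ℵ₀ := Cardinal.mul_le_max _ _
      _ = max (relCof J I₀) (relCof J I₁) := max_eq_left hinf
end
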